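/- Let F : ℝ^n × (0,∞) → ℝ be locally integrable and f ∈ L^p(ℝ^n) with p > 1, n ≥ 1. Suppose |F(x,t)| ≤ C · (average of |f| over the ball B^n(x,t)) for all (x,t). Then ‖F‖_{L^q(ℝ^{n+1}_+)} ≤ C' ‖f‖_{L^p(ℝ^n)} with q = (n+1)p/n, where C' depends only on n, p, C. -/

import Mathlib

open MeasureTheory Metric Set Filter Topology
open scoped ENNReal

noncomputable section

namespace LqAvgAux

variable {n : ℕ}

local notation "E" => EuclideanSpace ℝ (Fin n)

lemma volume_ball_eq (hn : 1 ≤ n) (x : EuclideanSpace ℝ (Fin n)) {t : ℝ} (ht : 0 ≤ t) :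
    volume (ball x t) = ENNReal.ofReal (t ^ n) * volume (ball (0 : EuclideanSpace ℝ (Fin n)) 1) := by
  haveI : Nontrivial (EuclideanSpace ℝ (Fin n)) :=
    Module.nontrivial_of_finrank_pos (R := ℝ) (by rw [finrank_euclideanSpace_fin]; omega)
  simpa [finrank_euclideanSpace_fin] using Measure.addHaar_ball (volume : Measure E) x ht

lemma measurable_ballInt (g : EuclideanSpace ℝ (Fin n) → ℝ≥0∞) (hg : Measurable g) :
    Measurable (fun z : EuclideanSpace ℝ (Fin n) × ℝ => ∫⁻ y in ball z.1 z.2, g y) := by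
  have hU : MeasurableSet {w : (EuclideanSpace ℝ (Fin n) × ℝ) × EuclideanSpace ℝ (Fin n) |
      dist w.2 w.1.1 < w.1.2} := by
    apply measurableSet_lt
    · exact (continuous_snd.dist (continuous_fst.fst)).measurable
    · exact continuous_fst.snd.measurable
  have hk : Measurable fun w : (EuclideanSpace ℝ (Fin n) × ℝ) × EuclideanSpace ℝ (Fin n) =>
      ({w : (EuclideanSpace ℝ (Fin n) × ℝ) × EuclideanSpace ℝ (Fin n) |
        dist w.2 w.1.1 < w.1.2}.indicator (fun w => g w.2)) w :=
    (hg.comp measurable_snd).indicator hU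
  have := hk.lintegral_prod_right' (ν := (volume : Measure (EuclideanSpace ℝ (Fin n))))
  convert this using 1
  ext z
  rw [← lintegral_indicator measurableSet_ball]
  congr 1


lemma measurable_ballInt_fixed (g : EuclideanSpace ℝ (Fin n) → ℝ≥0∞) (hg : Measurable g)
    (t : ℝ) :
    Measurable (fun x : EuclideanSpace ℝ (Fin n) => ∫⁻ y in ball x t, g y) := by
  have hU : MeasurableSet {w : EuclideanSpace ℝ (Fin n) × EuclideanSpace ℝ (Fin n) |
      dist w.2 w.1 < t} := by
    apply measurableSet_lt
    · exact (continuous_snd.dist continuous_fst).measurable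
    · exact measurable_const
  have hk : Measurable fun w : EuclideanSpace ℝ (Fin n) × EuclideanSpace ℝ (Fin n) =>
      ({w : EuclideanSpace ℝ (Fin n) × EuclideanSpace ℝ (Fin n) |
        dist w.2 w.1 < t}.indicator (fun w => g w.2)) w :=
    (hg.comp measurable_snd).indicator hU
  have := hk.lintegral_prod_right' (ν := (volume : Measure (EuclideanSpace ℝ (Fin n))))
  convert this using 1
  ext x
  rw [← lintegral_indicator measurableSet_ball]
  congr 1


lemma lintegral_avg (hn : 1 ≤ n) (g : EuclideanSpace ℝ (Fin n) → ℝ≥0∞) (hg : Measurable g)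
    {t : ℝ} (ht : 0 < t) :
    ∫⁻ x, ∫⁻ y in ball x t, g y =
      ENNReal.ofReal (t ^ n) * volume (ball (0 : EuclideanSpace ℝ (Fin n)) 1) * ∫⁻ y, g y := by
  have hU : MeasurableSet {w : EuclideanSpace ℝ (Fin n) × EuclideanSpace ℝ (Fin n) |
      dist w.2 w.1 < t} := by
    apply measurableSet_lt
    · exact (continuous_snd.dist continuous_fst).measurable
    · exact measurable_const
  set k : EuclideanSpace ℝ (Fin n) → EuclideanSpace ℝ (Fin n) → ℝ≥0∞ := fun x y =>
    ({w : EuclideanSpace ℝ (Fin n) × EuclideanSpace ℝ (Fin n) | dist w.2 w.1 < t}.indicator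
      (fun w => g w.2)) (x, y) with hk
  have hkm : Measurable (Function.uncurry k) := by
    have : Function.uncurry k = ({w : EuclideanSpace ℝ (Fin n) × EuclideanSpace ℝ (Fin n) |
        dist w.2 w.1 < t}.indicator (fun w => g w.2)) := by
      ext w; simp [Function.uncurry, hk]
    rw [this]
    exact (hg.comp measurable_snd).indicator hU
  have h1 : ∀ x, ∫⁻ y in ball x t, g y = ∫⁻ y, k x y := by
    intro x
    rw [← lintegral_indicator measurableSet_ball]
    congr 1
  have h2 : ∀ y, ∫⁻ x, k x y = g y * (ENNReal.ofReal (t ^ n) *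
      volume (ball (0 : EuclideanSpace ℝ (Fin n)) 1)) := by
    intro y
    have : ∀ x, k x y = (ball y t).indicator (fun _ => g y) x := by
      intro x
      by_cases h : dist y x < t
      · simp [hk, Set.indicator_apply, h, mem_ball, dist_comm]
      · simp [hk, Set.indicator_apply, h, mem_ball, dist_comm]
    simp_rw [this]
    rw [lintegral_indicator measurableSet_ball, setLIntegral_const,
      volume_ball_eq hn y ht.le]
  calc ∫⁻ x, ∫⁻ y in ball x t, g y = ∫⁻ x, ∫⁻ y, k x y := by simp_rw [h1]
    _ = ∫⁻ y, ∫⁻ x, k x y := lintegral_lintegral_swap hkm.aemeasurable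
    _ = ∫⁻ y, g y * (ENNReal.ofReal (t ^ n) *
        volume (ball (0 : EuclideanSpace ℝ (Fin n)) 1)) := by simp_rw [h2]
    _ = _ := by
        rw [lintegral_mul_const' _ _ (ENNReal.mul_ne_top ENNReal.ofReal_ne_top measure_ball_lt_top.ne)]
        ring

lemma le_rpow_add_one (a : ℝ≥0∞) {p : ℝ} (hp : 1 ≤ p) : a ≤ a ^ p + 1 := by
  rcases le_total a 1 with h | h
  · exact h.trans le_add_self
  · calc a = a ^ (1 : ℝ) := (ENNReal.rpow_one a).symm
      _ ≤ a ^ p := ENNReal.rpow_le_rpow_of_exponent_le h hp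
      _ ≤ a ^ p + 1 := le_self_add

lemma ballInt_lt_top (g : EuclideanSpace ℝ (Fin n) → ℝ≥0∞) {p : ℝ} (hp : 1 ≤ p)
    (hI : ∫⁻ y, g y ^ p ≠ ∞) (x : EuclideanSpace ℝ (Fin n)) (t : ℝ) :
    ∫⁻ y in ball x t, g y ≠ ∞ := by
  have h1 : ∫⁻ y in ball x t, g y ≤ ∫⁻ y in ball x t, (g y ^ p + 1) :=
    lintegral_mono fun y => le_rpow_add_one _ hp
  have h2 : ∫⁻ y in ball x t, (g y ^ p + 1) = (∫⁻ y in ball x t, g y ^ p) + volume (ball x t) := by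
    rw [lintegral_add_right _ measurable_const, setLIntegral_const, one_mul]
  refine ne_top_of_le_ne_top ?_ (h1.trans h2.le)
  exact ENNReal.add_ne_top.2 ⟨ne_top_of_le_ne_top hI (setLIntegral_le_lintegral _ _),
    measure_ball_lt_top.ne⟩

lemma tail_lintegral_le (g : EuclideanSpace ℝ (Fin n) → ℝ≥0∞) (hg : Measurable g)
    {l : ℝ≥0∞} (hl0 : l ≠ 0) (hlt : l ≠ ∞) {p : ℝ} (hp : 1 < p) :
    ∫⁻ y in {y | l < g y}, g y ≤ l ^ (1 - p) * ∫⁻ y, g y ^ p := by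
  have hs : MeasurableSet {y : EuclideanSpace ℝ (Fin n) | l < g y} :=
    measurableSet_lt measurable_const hg
  have key : ∀ y ∈ {y : EuclideanSpace ℝ (Fin n) | l < g y}, g y ≤ l ^ (1 - p) * g y ^ p := by
    intro y hy
    have hly : l < g y := hy
    by_cases htop : g y = ∞
    · rw [htop, ENNReal.top_rpow_of_pos (by linarith : (0:ℝ) < p),
        ENNReal.mul_top (ENNReal.rpow_pos (hl0.bot_lt) hlt).ne']
    · have hgy0 : g y ≠ 0 := (lt_of_le_of_lt zero_le hly).ne'
      have e1 : g y ^ (p - 1) * g y ^ (1:ℝ) = g y ^ p := by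
        rw [← ENNReal.rpow_add _ _ hgy0 htop]
        norm_num
      have e2 : l ^ (p - 1) ≤ g y ^ (p - 1) :=
        ENNReal.rpow_le_rpow hly.le (by linarith)
      calc g y = (l ^ (1 - p) * l ^ (p - 1)) * g y := by
            rw [← ENNReal.rpow_add _ _ hl0 hlt]; norm_num
        _ ≤ (l ^ (1 - p) * g y ^ (p - 1)) * g y := by
            gcongr
        _ = l ^ (1 - p) * g y ^ p := by rw [← e1, ENNReal.rpow_one]; ring
  calc ∫⁻ y in {y | l < g y}, g y ≤ ∫⁻ y in {y | l < g y}, l ^ (1 - p) * g y ^ p :=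
        setLIntegral_mono_ae ((measurable_const.mul (hg.pow_const p)).aemeasurable)
          (Filter.Eventually.of_forall key)
    _ ≤ ∫⁻ y, l ^ (1 - p) * g y ^ p := setLIntegral_le_lintegral _ _
    _ = l ^ (1 - p) * ∫⁻ y, g y ^ p := lintegral_const_mul' _ _
          (by
            simp only [ne_eq, ENNReal.rpow_eq_top_iff, not_or, not_and, not_lt]
            constructor
            · intro h; exact absurd h hl0
            · intro h; exact absurd h hlt)


lemma lintegral_Ioo_rpow {r : ℝ} (hr : 0 < r) {M : ℝ} (hM : 0 ≤ M) :
    ∫⁻ l in Ioo (0:ℝ) M, ENNReal.ofReal (l ^ (r - 1)) = ENNReal.ofReal (M ^ r / r) := by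
  have hint : IntegrableOn (fun l : ℝ => l ^ (r - 1)) (Ioo 0 M) volume := by
    have := (intervalIntegral.intervalIntegrable_rpow' (a := 0) (b := M)
      (by linarith : (-1:ℝ) < r - 1)).1
    exact this.mono_set Ioo_subset_Ioc_self
  rw [← ofReal_integral_eq_lintegral_ofReal hint]
  · congr 1
    rw [← integral_Ioc_eq_integral_Ioo, ← intervalIntegral.integral_of_le hM,
      integral_rpow (Or.inl (by linarith))]
    rw [Real.zero_rpow (by linarith : r - 1 + 1 ≠ 0)]
    rw [show r - 1 + 1 = r by ring]
    ring
  · filter_upwards [ae_restrict_mem measurableSet_Ioo] with l hl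
    exact Real.rpow_nonneg hl.1.le _

lemma rpow_mul_self {a : ℝ≥0∞} (ha : a ≠ ∞) {r : ℝ} (hr : 0 < r) :
    a ^ r * a = a ^ (r + 1) := by
  by_cases h0 : a = 0
  · rw [h0, ENNReal.zero_rpow_of_pos hr, ENNReal.zero_rpow_of_pos (by linarith), mul_zero]
  · rw [ENNReal.rpow_add _ _ h0 ha, ENNReal.rpow_one]

lemma step5 (g : EuclideanSpace ℝ (Fin n) → ℝ≥0∞) (hg : Measurable g) (hfin : ∀ y, g y ≠ ∞)
    {r : ℝ} (hr : 0 < r) :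
    ∫⁻ l in Ioi (0:ℝ), ENNReal.ofReal l ^ (r - 1) *
        ∫⁻ y in {y | ENNReal.ofReal (l/2) < g y}, g y
      ≤ ENNReal.ofReal (2 ^ r / r) * ∫⁻ y, g y ^ (r + 1) := by
  set W : Set (ℝ × EuclideanSpace ℝ (Fin n)) := {w | ENNReal.ofReal (w.1/2) < g w.2} with hW
  have hWm : MeasurableSet W := by
    apply measurableSet_lt
    · exact ((measurable_fst.div_const 2).ennreal_ofReal)
    · exact hg.comp measurable_snd
  set k : ℝ → EuclideanSpace ℝ (Fin n) → ℝ≥0∞ := fun l y =>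
    W.indicator (fun w => ENNReal.ofReal w.1 ^ (r - 1) * g w.2) (l, y) with hk
  have hkm : Measurable (Function.uncurry k) := by
    have : Function.uncurry k =
        W.indicator (fun w => ENNReal.ofReal w.1 ^ (r - 1) * g w.2) := by
      ext w; simp [Function.uncurry, hk]
    rw [this]
    refine Measurable.indicator (Measurable.mul ?_ (hg.comp measurable_snd)) hWm
    exact ENNReal.continuous_rpow_const.measurable.comp measurable_fst.ennreal_ofReal
  have h1 : ∀ l : ℝ, l ∈ Ioi (0:ℝ) → ENNReal.ofReal l ^ (r - 1) *
      ∫⁻ y in {y | ENNReal.ofReal (l/2) < g y}, g y = ∫⁻ y, k l y := by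
    intro l hl
    have hne : ENNReal.ofReal l ^ (r - 1) ≠ ∞ := by
      rw [ne_eq, ENNReal.rpow_eq_top_iff]
      push_neg
      constructor
      · intro h; exact absurd h (by simpa using (mem_Ioi.1 hl))
      · intro h; exact absurd h ENNReal.ofReal_ne_top
    have hsm : MeasurableSet {y : EuclideanSpace ℝ (Fin n) | ENNReal.ofReal (l/2) < g y} :=
      measurableSet_lt measurable_const hg
    rw [← lintegral_const_mul' _ _ hne, ← lintegral_indicator hsm]
    congr 1
  have h2 : ∀ y, ∫⁻ l in Ioi (0:ℝ), k l y ≤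
      ENNReal.ofReal (2 ^ r / r) * (g y ^ r * g y) := by
    intro y
    have hgy := hfin y
    have hsec : ∀ l : ℝ, l ∈ Ioi (0:ℝ) →
        k l y = (Ioo (0:ℝ) (2 * (g y).toReal)).indicator
          (fun l => ENNReal.ofReal (l ^ (r - 1)) * g y) l := by
      intro l hl
      have hl0 : (0:ℝ) < l := mem_Ioi.1 hl
      have hmem : ((l, y) ∈ W) ↔ l ∈ Ioo (0:ℝ) (2 * (g y).toReal) := by
        simp only [hW, mem_setOf_eq, mem_Ioo]
        rw [ENNReal.ofReal_lt_iff_lt_toReal (by linarith) hgy]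
        constructor
        · intro h; exact ⟨hl0, by linarith⟩
        · intro h; linarith [h.2]
      simp only [hk, Set.indicator_apply]
      rw [ENNReal.ofReal_rpow_of_pos hl0]
      exact if_congr hmem rfl rfl
    calc ∫⁻ l in Ioi (0:ℝ), k l y
        = ∫⁻ l in Ioi (0:ℝ), (Ioo (0:ℝ) (2 * (g y).toReal)).indicator
            (fun l => ENNReal.ofReal (l ^ (r - 1)) * g y) l :=
          setLIntegral_congr_fun measurableSet_Ioi (fun l hl => hsec l hl)
      _ ≤ ∫⁻ l, (Ioo (0:ℝ) (2 * (g y).toReal)).indicator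
            (fun l => ENNReal.ofReal (l ^ (r - 1)) * g y) l :=
          setLIntegral_le_lintegral _ _
      _ = ∫⁻ l in Ioo (0:ℝ) (2 * (g y).toReal), ENNReal.ofReal (l ^ (r - 1)) * g y := by
          rw [lintegral_indicator measurableSet_Ioo]
      _ = ENNReal.ofReal ((2 * (g y).toReal) ^ r / r) * g y := by
          rw [lintegral_mul_const' _ _ hgy, lintegral_Ioo_rpow hr (by positivity)]
      _ ≤ ENNReal.ofReal (2 ^ r / r) * (g y ^ r * g y) := by
          rw [Real.mul_rpow (by norm_num) ENNReal.toReal_nonneg,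
            show (2:ℝ) ^ r * (g y).toReal ^ r / r = (2 ^ r / r) * (g y).toReal ^ r by ring,
            ENNReal.ofReal_mul (by positivity),
            ← ENNReal.ofReal_rpow_of_nonneg ENNReal.toReal_nonneg hr.le,
            ENNReal.ofReal_toReal hgy, mul_assoc]
  calc ∫⁻ l in Ioi (0:ℝ), ENNReal.ofReal l ^ (r - 1) *
        ∫⁻ y in {y | ENNReal.ofReal (l/2) < g y}, g y
      = ∫⁻ l in Ioi (0:ℝ), ∫⁻ y, k l y :=
        setLIntegral_congr_fun measurableSet_Ioi (fun l hl => h1 l hl)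
    _ = ∫⁻ y, ∫⁻ l in Ioi (0:ℝ), k l y := lintegral_lintegral_swap hkm.aemeasurable
    _ ≤ ∫⁻ y, ENNReal.ofReal (2 ^ r / r) * (g y ^ r * g y) := lintegral_mono h2
    _ = ENNReal.ofReal (2 ^ r / r) * ∫⁻ y, g y ^ (r + 1) := by
        rw [lintegral_const_mul' _ _ ENNReal.ofReal_ne_top]
        congr 1
        exact lintegral_congr fun y => by rw [rpow_mul_self (hfin y) hr]


lemma dist_bound (hn : 1 ≤ n) (g : EuclideanSpace ℝ (Fin n) → ℝ≥0∞) (hg : Measurable g)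
    {l : ℝ≥0∞} (hl0 : l ≠ 0) (hlt : l ≠ ∞) :
    volume ({z : EuclideanSpace ℝ (Fin n) × ℝ | l + l <
        (ENNReal.ofReal (z.2 ^ n) * volume (ball (0 : EuclideanSpace ℝ (Fin n)) 1))⁻¹ *
          ∫⁻ y in ball z.1 z.2, g y}
      ∩ (univ ×ˢ Ioi (0:ℝ))) ≤
      ((∫⁻ y in {y | l < g y}, g y) *
          (volume (ball (0 : EuclideanSpace ℝ (Fin n)) 1) * l)⁻¹) ^ (1/(n:ℝ)) *
        (l⁻¹ * ∫⁻ y in {y | l < g y}, g y) := by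
  set V := volume (ball (0 : EuclideanSpace ℝ (Fin n)) 1) with hVdef
  have hV0 : V ≠ 0 := (measure_ball_pos _ _ one_pos).ne'
  have hVt : V ≠ ∞ := measure_ball_lt_top.ne
  have hn1 : (0:ℝ) < (n:ℝ) := by exact_mod_cast Nat.lt_of_lt_of_le Nat.zero_lt_one hn
  set N := ∫⁻ y in {y | l < g y}, g y with hNdef
  set g' : EuclideanSpace ℝ (Fin n) → ℝ≥0∞ := {y | l < g y}.indicator g with hg'def
  have hsm : MeasurableSet {y : EuclideanSpace ℝ (Fin n) | l < g y} :=
    measurableSet_lt measurable_const hg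
  have hg'm : Measurable g' := hg.indicator hsm
  have hNg' : ∫⁻ y, g' y = N := by rw [hg'def, lintegral_indicator hsm]
  set ρ : ℝ≥0∞ := (N * (V * l)⁻¹) ^ (1/(n:ℝ)) with hρdef
  set J : Set ℝ := {t | 0 < t ∧ ENNReal.ofReal t < ρ} with hJdef
  have hgle : ∀ y, g y ≤ g' y + l := by
    intro y
    by_cases h : l < g y
    · exact le_trans (le_of_eq (Set.indicator_of_mem (show y ∈ {y | l < g y} from h) g).symm)
        le_self_add
    · exact (not_lt.1 h).trans le_add_self
  have hbne : ∀ t : ℝ, 0 < t →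
      (ENNReal.ofReal (t ^ n) * V) ≠ 0 ∧ (ENNReal.ofReal (t ^ n) * V) ≠ ∞ := by
    intro t ht
    constructor
    · exact mul_ne_zero (by simp [ENNReal.ofReal_eq_zero, not_le]; positivity) hV0
    · exact ENNReal.mul_ne_top ENNReal.ofReal_ne_top hVt
  set U := {z : EuclideanSpace ℝ (Fin n) × ℝ | l <
      (ENNReal.ofReal (z.2 ^ n) * V)⁻¹ * ∫⁻ y in ball z.1 z.2, g' y}
    ∩ (univ ×ˢ Ioi (0:ℝ)) with hUdef
  have hAf'm : Measurable (fun z : EuclideanSpace ℝ (Fin n) × ℝ =>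
      (ENNReal.ofReal (z.2 ^ n) * V)⁻¹ * ∫⁻ y in ball z.1 z.2, g' y) := by
    apply Measurable.mul
    · apply Measurable.inv
      exact ((ENNReal.continuous_ofReal.comp ((continuous_snd.pow n))).measurable).mul_const V
    · exact measurable_ballInt g' hg'm
  have hUm : MeasurableSet U :=
    (measurableSet_lt measurable_const hAf'm).inter (MeasurableSet.univ.prod measurableSet_Ioi)
  have hsubset : {z : EuclideanSpace ℝ (Fin n) × ℝ | l + l <
      (ENNReal.ofReal (z.2 ^ n) * V)⁻¹ * ∫⁻ y in ball z.1 z.2, g y}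
      ∩ (univ ×ˢ Ioi (0:ℝ)) ⊆ U := by
    rintro z ⟨hz1, hz2⟩
    have ht : (0:ℝ) < z.2 := by
      simpa using (mem_prod.1 hz2).2
    set b := ENNReal.ofReal (z.2 ^ n) * V with hbdef
    obtain ⟨hb0, hbt⟩ := hbne z.2 ht
    have hble : ∫⁻ y in ball z.1 z.2, g y ≤ (∫⁻ y in ball z.1 z.2, g' y) + l * b := by
      calc ∫⁻ y in ball z.1 z.2, g y ≤ ∫⁻ y in ball z.1 z.2, (g' y + l) :=
            lintegral_mono fun y => hgle y
        _ = (∫⁻ y in ball z.1 z.2, g' y) + l * volume (ball z.1 z.2) := by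
            rw [lintegral_add_right _ measurable_const, setLIntegral_const]
        _ = (∫⁻ y in ball z.1 z.2, g' y) + l * b := by
            rw [hbdef, volume_ball_eq hn z.1 ht.le]
    have key : l + l < ((ENNReal.ofReal (z.2 ^ n) * V)⁻¹ * ∫⁻ y in ball z.1 z.2, g' y) + l := by
      calc l + l < b⁻¹ * ∫⁻ y in ball z.1 z.2, g y := hz1
        _ ≤ b⁻¹ * ((∫⁻ y in ball z.1 z.2, g' y) + l * b) := mul_le_mul_right hble _
        _ = b⁻¹ * (∫⁻ y in ball z.1 z.2, g' y) + b⁻¹ * (l * b) := mul_add _ _ _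
        _ = (ENNReal.ofReal (z.2 ^ n) * V)⁻¹ * (∫⁻ y in ball z.1 z.2, g' y) + l := by
            rw [mul_comm l b, ← mul_assoc, ENNReal.inv_mul_cancel hb0 hbt, one_mul]
    refine ⟨?_, hz2⟩
    exact (ENNReal.add_lt_add_iff_right hlt).1 key
  have hJprop : MeasurableSet J ∧ volume J ≤ ρ := by
    by_cases hρ : ρ = ∞
    · have : J = Ioi 0 := by
        ext t; simp [hJdef, hρ, mem_Ioi, ENNReal.ofReal_lt_top]
      rw [this, hρ]
      exact ⟨measurableSet_Ioi, le_top⟩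
    · have : J = Ioo 0 ρ.toReal := by
        ext t
        simp only [hJdef, mem_setOf_eq, mem_Ioo]
        exact and_congr_right fun h => ENNReal.ofReal_lt_iff_lt_toReal h.le hρ
      rw [this, Real.volume_Ioo, sub_zero]
      exact ⟨measurableSet_Ioo, ENNReal.ofReal_toReal_le⟩
  have hsect : ∀ t : ℝ, volume ((fun x => (x, t)) ⁻¹' U) ≤
      J.indicator (fun _ => l⁻¹ * N) t := by
    intro t
    by_cases htJ : t ∈ J
    · rw [Set.indicator_of_mem htJ]
      have ht : (0:ℝ) < t := htJ.1
      obtain ⟨hb0, hbt⟩ := hbne t ht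
      have hpre : (fun x => (x, t)) ⁻¹' U ⊆
          {x | l ≤ (ENNReal.ofReal (t ^ n) * V)⁻¹ * ∫⁻ y in ball x t, g' y} := by
        intro x hx
        have h1 := hx.1
        simp only [mem_setOf_eq] at h1 ⊢
        exact h1.le
      have hFm : Measurable (fun x : EuclideanSpace ℝ (Fin n) =>
          (ENNReal.ofReal (t ^ n) * V)⁻¹ * ∫⁻ y in ball x t, g' y) :=
        measurable_const.mul (measurable_ballInt_fixed g' hg'm t)
      have hint : ∫⁻ x, (ENNReal.ofReal (t ^ n) * V)⁻¹ * ∫⁻ y in ball x t, g' y = N := by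
        rw [lintegral_const_mul' _ _ (ENNReal.inv_ne_top.2 hb0), lintegral_avg hn g' hg'm ht,
          hNg', ← mul_assoc, ENNReal.inv_mul_cancel hb0 hbt, one_mul]
      have cheb := mul_meas_ge_le_lintegral₀ (μ := (volume : Measure (EuclideanSpace ℝ (Fin n)))) hFm.aemeasurable l
      rw [hint] at cheb
      calc volume ((fun x => (x, t)) ⁻¹' U) ≤
          volume {x | l ≤ (ENNReal.ofReal (t ^ n) * V)⁻¹ * ∫⁻ y in ball x t, g' y} :=
            measure_mono hpre
        _ ≤ l⁻¹ * N := by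
            have h2 := mul_le_mul_right cheb l⁻¹
            rwa [← mul_assoc, ENNReal.inv_mul_cancel hl0 hlt, one_mul] at h2
    · rw [Set.indicator_of_notMem htJ]
      have : (fun x => (x, t)) ⁻¹' U = ∅ := by
        rw [eq_empty_iff_forall_notMem]
        intro x hx
        obtain ⟨hx1, hx2⟩ := hx
        have ht : (0:ℝ) < t := by simpa using (mem_prod.1 hx2).2
        have hρt : ρ ≤ ENNReal.ofReal t := by
          by_contra hcon
          exact htJ ⟨ht, not_le.1 hcon⟩
        obtain ⟨hb0, hbt⟩ := hbne t ht
        -- from hx1 : l < b⁻¹ * m, get b * l < m ≤ N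
        set m := ∫⁻ y in ball x t, g' y with hmdef
        have hmN : m ≤ N := by
          rw [← hNg']; exact setLIntegral_le_lintegral _ _
        have hblm : (ENNReal.ofReal (t ^ n) * V) * l < m := by
          by_contra hcon
          have : (ENNReal.ofReal (t ^ n) * V)⁻¹ * m ≤ l := by
            calc (ENNReal.ofReal (t ^ n) * V)⁻¹ * m ≤
                (ENNReal.ofReal (t ^ n) * V)⁻¹ * ((ENNReal.ofReal (t ^ n) * V) * l) :=
                  mul_le_mul_right (not_lt.1 hcon) _
              _ = l := by rw [← mul_assoc, ENNReal.inv_mul_cancel hb0 hbt, one_mul]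
          exact absurd hx1 (not_lt.2 this)
        have hlt2 : ENNReal.ofReal (t ^ n) * (V * l) < N :=
          lt_of_lt_of_le (by rw [← mul_assoc]; exact hblm) hmN
        have hVl0 : V * l ≠ 0 := mul_ne_zero hV0 hl0
        have hVlt : V * l ≠ ∞ := ENNReal.mul_ne_top hVt hlt
        have hfrac : ENNReal.ofReal (t ^ n) < N * (V * l)⁻¹ := by
          rw [mul_comm N _, ← ENNReal.div_eq_inv_mul,
            ENNReal.lt_div_iff_mul_lt (Or.inl hVl0) (Or.inl hVlt)]
          exact hlt2
        -- but ρ ≤ ofReal t gives N * (V*l)⁻¹ = ρ ^ n ≤ (ofReal t) ^ n = ofReal (t ^ n)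
        have hpow : N * (V * l)⁻¹ ≤ ENNReal.ofReal (t ^ n) := by
          have h1 : ρ ^ (n:ℝ) ≤ (ENNReal.ofReal t) ^ (n:ℝ) :=
            ENNReal.rpow_le_rpow hρt (le_of_lt hn1)
          have h2 : ρ ^ (n:ℝ) = N * (V * l)⁻¹ := by
            rw [hρdef, ← ENNReal.rpow_mul, one_div, inv_mul_cancel₀ hn1.ne', ENNReal.rpow_one]
          have h3 : (ENNReal.ofReal t) ^ (n:ℝ) = ENNReal.ofReal (t ^ n) := by
            rw [ENNReal.rpow_natCast, ← ENNReal.ofReal_pow ht.le]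
          rw [h2, h3] at h1
          exact h1
        exact absurd hfrac (not_lt.2 hpow)
      rw [this, measure_empty]
  calc volume ({z : EuclideanSpace ℝ (Fin n) × ℝ | l + l <
        (ENNReal.ofReal (z.2 ^ n) * V)⁻¹ * ∫⁻ y in ball z.1 z.2, g y}
      ∩ (univ ×ˢ Ioi (0:ℝ))) ≤ volume U := measure_mono hsubset
    _ = ∫⁻ t : ℝ, volume ((fun x => (x, t)) ⁻¹' U) := by
        rw [Measure.volume_eq_prod, Measure.prod_apply_symm hUm]
    _ ≤ ∫⁻ t : ℝ, J.indicator (fun _ => l⁻¹ * N) t := lintegral_mono hsect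
    _ = (l⁻¹ * N) * volume J := by
        rw [lintegral_indicator hJprop.1, setLIntegral_const]
    _ ≤ (l⁻¹ * N) * ρ := mul_le_mul_right hJprop.2 _
    _ = ρ * (l⁻¹ * N) := mul_comm _ _

end LqAvgAux

set_option maxHeartbeats 1000000 in
open LqAvgAux in
/-- Let F : ℝⁿ × (0,∞) → ℝ be locally integrable and f ∈ Lᵖ(ℝⁿ), p > 1, n ≥ 1.  If
|F(x,t)| ≤ C ⨍_{B(x,t)} |f| for all (x,t) with t > 0, then
‖F‖_{L^q(ℝ^{n+1}_+)} ≤ C' ‖f‖_{L^p(ℝⁿ)} with q = (n+1)p/n, C' = C'(n,p,C). -/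
theorem lq_bound_of_avg_bound (n : ℕ) (hn : 1 ≤ n) (p : ℝ) (hp : 1 < p)
    (C : ℝ) (hC : 0 ≤ C) :
    ∃ C' : ℝ, 0 < C' ∧
      ∀ (f : EuclideanSpace ℝ (Fin n) → ℝ) (F : EuclideanSpace ℝ (Fin n) × ℝ → ℝ),
        MemLp f (ENNReal.ofReal p) volume →
        LocallyIntegrableOn F (univ ×ˢ Ioi (0 : ℝ)) volume →
        (∀ (x : EuclideanSpace ℝ (Fin n)) (t : ℝ), 0 < t →
            |F (x, t)| ≤ C * ⨍ y in ball x t, |f y|) →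
        eLpNorm F (ENNReal.ofReal ((n + 1) * p / n))
            (volume.restrict (univ ×ˢ Ioi (0 : ℝ))) ≤
          ENNReal.ofReal C' * eLpNorm f (ENNReal.ofReal p) volume := by
  have hn1 : (0:ℝ) < (n:ℝ) := by exact_mod_cast Nat.lt_of_lt_of_le Nat.zero_lt_one hn
  have hp0 : (0:ℝ) < p := by linarith
  set q : ℝ := ((n:ℝ) + 1) * p / (n:ℝ) with hqdef
  have hqp : q = p + p / n := by rw [hqdef]; field_simp
  have hpn : 0 < p / n := div_pos hp0 hn1
  have hq1 : 1 < q := by rw [hqp]; linarith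
  have hq0 : (0:ℝ) < q := by linarith
  set V := volume (ball (0 : EuclideanSpace ℝ (Fin n)) 1) with hVdef
  have hV0 : V ≠ 0 := (measure_ball_pos _ _ one_pos).ne'
  have hVt : V ≠ ∞ := measure_ball_lt_top.ne
  set Vinv : ℝ≥0∞ := (V⁻¹) ^ (1/(n:ℝ)) with hVinvdef
  have hVinvt : Vinv ≠ ∞ :=
    ENNReal.rpow_ne_top_of_nonneg (by positivity) (ENNReal.inv_ne_top.2 hV0)
  set c₂ : ℝ := q * 2 ^ (p / n + 1) with hc2def
  have hc20 : 0 < c₂ := by positivity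
  set c₃ : ℝ := 2 ^ (p - 1) / (p - 1) with hc3def
  set K : ℝ≥0∞ := ENNReal.ofReal C ^ q * Vinv * ENNReal.ofReal c₂ * ENNReal.ofReal c₃ with hKdef
  have hKt : K ≠ ∞ := by
    refine ENNReal.mul_ne_top (ENNReal.mul_ne_top (ENNReal.mul_ne_top ?_ hVinvt)
      ENNReal.ofReal_ne_top) ENNReal.ofReal_ne_top
    exact ENNReal.rpow_ne_top_of_nonneg hq0.le ENNReal.ofReal_ne_top
  refine ⟨(K ^ (1/q)).toReal + 1, by positivity, ?_⟩
  intro f F hf hF hbound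
  clear hF
  have hfm := hf.1
  set f₀ := hfm.aemeasurable.mk f with hf₀def
  have hf₀m : Measurable f₀ := hfm.aemeasurable.measurable_mk
  have hff₀ : f =ᵐ[volume] f₀ := hfm.aemeasurable.ae_eq_mk
  set g : EuclideanSpace ℝ (Fin n) → ℝ≥0∞ := fun y => ENNReal.ofReal ‖f₀ y‖ with hgdef
  have hgm : Measurable g := hf₀m.norm.ennreal_ofReal
  have hgfin : ∀ y, g y ≠ ∞ := fun y => ENNReal.ofReal_ne_top
  have hgae : (fun y => ENNReal.ofReal ‖f y‖) =ᵐ[volume] g := by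
    filter_upwards [hff₀] with y hy
    rw [hgdef]; simp only; rw [hy]
  set I := ∫⁻ y, g y ^ p with hIdef
  have hIeq : eLpNorm f (ENNReal.ofReal p) volume = I ^ (1/p) := by
    have hpE0 : (ENNReal.ofReal p) ≠ 0 := by
      rw [ne_eq, ENNReal.ofReal_eq_zero, not_le]
      linarith
    rw [eLpNorm_eq_lintegral_rpow_enorm_toReal hpE0 ENNReal.ofReal_ne_top,
      ENNReal.toReal_ofReal hp0.le]
    congr 1
    apply lintegral_congr_ae
    filter_upwards [hgae] with y hy
    rw [← ofReal_norm, hy]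
  have hIfin : I ≠ ∞ := by
    intro hcon
    have h1 := hf.2
    rw [hIeq, hcon, ENNReal.top_rpow_of_pos (by positivity)] at h1
    exact lt_irrefl _ h1
  set A : EuclideanSpace ℝ (Fin n) × ℝ → ℝ≥0∞ := fun z =>
    (ENNReal.ofReal (z.2 ^ n) * V)⁻¹ * ∫⁻ y in ball z.1 z.2, g y with hAdef
  have hAm : Measurable A := by
    apply Measurable.mul
    · exact (((ENNReal.continuous_ofReal.comp (continuous_snd.pow n)).measurable).mul_const V).inv
    · exact measurable_ballInt g hgm
  have hAfin : ∀ z, A z ≠ ∞ := by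
    intro z
    by_cases ht : 0 < z.2
    · refine ENNReal.mul_ne_top ?_ (ballInt_lt_top g hp.le hIfin z.1 z.2)
      refine ENNReal.inv_ne_top.2 (mul_ne_zero ?_ hV0)
      simp only [ne_eq, ENNReal.ofReal_eq_zero, not_le]
      positivity
    · have hb : ball z.1 z.2 = ∅ := ball_eq_empty.2 (not_lt.1 ht)
      rw [hAdef]
      simp [hb]
  have hSm : MeasurableSet (univ ×ˢ Ioi (0:ℝ) : Set (EuclideanSpace ℝ (Fin n) × ℝ)) :=
    MeasurableSet.univ.prod measurableSet_Ioi
  have hF1 : ∀ z ∈ (univ ×ˢ Ioi (0:ℝ) : Set (EuclideanSpace ℝ (Fin n) × ℝ)),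
      (‖F z‖₊ : ℝ≥0∞) ≤ ENNReal.ofReal C * A z := by
    rintro ⟨x, t⟩ hz
    have ht : 0 < t := by simpa using (mem_prod.1 hz).2
    have hb0 : ENNReal.ofReal (t ^ n) * V ≠ 0 :=
      mul_ne_zero (by simp only [ne_eq, ENNReal.ofReal_eq_zero, not_le]; positivity) hV0
    have hvol : volume (ball x t) = ENNReal.ofReal (t ^ n) * V := volume_ball_eq hn x ht.le
    have hA' : A (x, t) = (volume (ball x t))⁻¹ * ∫⁻ y in ball x t, g y := by
      rw [hAdef]; simp only; rw [hvol]
    have havg : ⨍ y in ball x t, |f y| =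
        (volume (ball x t)).toReal⁻¹ * (∫⁻ y in ball x t, ENNReal.ofReal ‖f y‖).toReal := by
      rw [setAverage_eq, smul_eq_mul]
      congr 1
      have habs : ∀ y, |f y| = ‖f y‖ := fun y => (Real.norm_eq_abs _).symm
      simp_rw [habs]
      exact integral_eq_lintegral_of_nonneg_ae
        (Filter.Eventually.of_forall fun y => norm_nonneg _) hfm.norm.restrict
    calc (‖F (x, t)‖₊ : ℝ≥0∞) = ENNReal.ofReal |F (x, t)| := Real.enorm_eq_ofReal_abs _
      _ ≤ ENNReal.ofReal (C * ⨍ y in ball x t, |f y|) :=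
          ENNReal.ofReal_le_ofReal (hbound x t ht)
      _ = ENNReal.ofReal C * ENNReal.ofReal (⨍ y in ball x t, |f y|) := ENNReal.ofReal_mul hC
      _ ≤ ENNReal.ofReal C * A (x, t) := by
          apply mul_le_mul_right
          rw [havg, ENNReal.ofReal_mul (by positivity), hA']
          have h1 : ENNReal.ofReal (volume (ball x t)).toReal⁻¹ = (volume (ball x t))⁻¹ := by
            rw [← ENNReal.toReal_inv, ENNReal.ofReal_toReal]
            rw [ne_eq, ENNReal.inv_eq_top, hvol]
            exact hb0
          rw [h1]
          apply mul_le_mul_right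
          refine le_trans ENNReal.ofReal_toReal_le ?_
          exact le_of_eq (lintegral_congr_ae (ae_restrict_of_ae hgae))
  set μ := volume.restrict (univ ×ˢ Ioi (0:ℝ) : Set (EuclideanSpace ℝ (Fin n) × ℝ)) with hμdef
  have hAtm : Measurable (fun z => (A z).toReal) := hAm.ennreal_toReal
  have hlc := lintegral_comp_eq_lintegral_meas_lt_mul μ
    (f := fun z => (A z).toReal) (g := fun s => q * s ^ (q - 1))
    (Filter.Eventually.of_forall fun z => ENNReal.toReal_nonneg)
    hAtm.aemeasurable
    (fun t ht => (intervalIntegral.intervalIntegrable_rpow' (by linarith)).const_mul q)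
    (by
      filter_upwards [self_mem_ae_restrict measurableSet_Ioi] with t ht
      exact mul_nonneg hq0.le (Real.rpow_nonneg (le_of_lt (mem_Ioi.1 ht)) _))
  have hcomp : ∀ ω, ENNReal.ofReal (∫ t in (0:ℝ)..(A ω).toReal, q * t ^ (q-1)) = A ω ^ q := by
    intro ω
    have hc : (0:ℝ) ≤ (A ω).toReal := ENNReal.toReal_nonneg
    have hval : ∫ t in (0:ℝ)..(A ω).toReal, q * t ^ (q-1) = (A ω).toReal ^ q := by
      rw [intervalIntegral.integral_const_mul, integral_rpow (Or.inl (by linarith)),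
        show q - 1 + 1 = q by ring, Real.zero_rpow hq0.ne', sub_zero]
      field_simp
    rw [hval, ← ENNReal.ofReal_rpow_of_nonneg hc hq0.le, ENNReal.ofReal_toReal (hAfin ω)]
  have hAq : ∫⁻ z, A z ^ q ∂μ = ∫⁻ t in Ioi (0:ℝ),
      μ {a | t < (A a).toReal} * ENNReal.ofReal (q * t ^ (q-1)) := by
    rw [← hlc]
    exact lintegral_congr fun ω => (hcomp ω).symm
  have hDbound : ∀ t : ℝ, 0 < t →
      μ {a | t < (A a).toReal} * ENNReal.ofReal (q * t ^ (q-1)) ≤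
        (Vinv * I ^ (1/(n:ℝ)) * ENNReal.ofReal c₂) *
          (ENNReal.ofReal t ^ (p - 1 - 1) * ∫⁻ y in {y | ENNReal.ofReal (t/2) < g y}, g y) := by
    intro t ht
    set l : ℝ≥0∞ := ENNReal.ofReal (t/2) with hldef
    have hl0 : l ≠ 0 := by
      rw [hldef, ne_eq, ENNReal.ofReal_eq_zero, not_le]
      linarith
    have hlt : l ≠ ∞ := ENNReal.ofReal_ne_top
    set N := ∫⁻ y in {y | l < g y}, g y with hNdef
    have hmeas : μ {a | t < (A a).toReal} =
        volume ({z | t < (A z).toReal} ∩ (univ ×ˢ Ioi (0:ℝ))) := by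
      rw [hμdef, Measure.restrict_apply (measurableSet_lt measurable_const hAtm)]
    have hsub : {z : EuclideanSpace ℝ (Fin n) × ℝ | t < (A z).toReal} ∩ (univ ×ˢ Ioi (0:ℝ)) ⊆
        {z | l + l < A z} ∩ (univ ×ˢ Ioi (0:ℝ)) := by
      rintro z ⟨hz1, hz2⟩
      refine ⟨?_, hz2⟩
      rw [mem_setOf_eq] at hz1 ⊢
      rw [hldef, ← ENNReal.ofReal_add (by linarith) (by linarith), show t/2 + t/2 = t by ring]
      exact (ENNReal.ofReal_lt_iff_lt_toReal ht.le (hAfin z)).2 hz1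
    have hD : μ {a | t < (A a).toReal} ≤ ((N * (V * l)⁻¹) ^ (1/(n:ℝ))) * (l⁻¹ * N) := by
      rw [hmeas]
      refine le_trans (measure_mono hsub) ?_
      exact dist_bound hn g hgm hl0 hlt
    have hNle : N ≤ l ^ (1 - p) * I := tail_lintegral_le g hgm hl0 hlt hp
    have hll : l ^ ((1:ℝ) - p) * l⁻¹ = l ^ (-p) := by
      rw [← ENNReal.rpow_neg_one l, ← ENNReal.rpow_add _ _ hl0 hlt]
      congr 1
      ring
    have hρle : (N * (V * l)⁻¹) ^ (1/(n:ℝ)) ≤ Vinv * I ^ (1/(n:ℝ)) * l ^ (-(p/(n:ℝ))) := by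
      have e1 : (V * l)⁻¹ = V⁻¹ * l⁻¹ := ENNReal.mul_inv (Or.inl hV0) (Or.inl hVt)
      have h1 : N * (V * l)⁻¹ ≤ V⁻¹ * I * l ^ (-p) := by
        rw [e1]
        calc N * (V⁻¹ * l⁻¹) ≤ (l ^ ((1:ℝ) - p) * I) * (V⁻¹ * l⁻¹) := mul_le_mul_left hNle _
          _ = V⁻¹ * I * (l ^ ((1:ℝ) - p) * l⁻¹) := by ring
          _ = V⁻¹ * I * l ^ (-p) := by rw [hll]
      calc (N * (V * l)⁻¹) ^ (1/(n:ℝ)) ≤ (V⁻¹ * I * l ^ (-p)) ^ (1/(n:ℝ)) :=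
            ENNReal.rpow_le_rpow h1 (by positivity)
        _ = Vinv * I ^ (1/(n:ℝ)) * l ^ (-(p/(n:ℝ))) := by
            rw [ENNReal.mul_rpow_of_nonneg _ _ (by positivity : (0:ℝ) ≤ 1/(n:ℝ)),
              ENNReal.mul_rpow_of_nonneg _ _ (by positivity : (0:ℝ) ≤ 1/(n:ℝ)),
              ← ENNReal.rpow_mul, hVinvdef]
            congr 2
            field_simp
    have hscalar : l ^ (-(p/(n:ℝ))) * l⁻¹ * ENNReal.ofReal (q * t ^ (q-1)) =
        ENNReal.ofReal c₂ * ENNReal.ofReal t ^ (p - 1 - 1) := by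
      have hll2 : l ^ (-(p/(n:ℝ))) * l⁻¹ = l ^ (-(p/(n:ℝ)) - 1) := by
        rw [← ENNReal.rpow_neg_one l, ← ENNReal.rpow_add _ _ hl0 hlt]
        congr 1
        try ring
      have hreal : (t/2) ^ (-(p/(n:ℝ)) - 1) * (q * t ^ (q-1)) = c₂ * t ^ (p - 2) := by
        have e1 : (t/2) ^ (-(p/(n:ℝ)) - 1) =
            t ^ (-(p/(n:ℝ)) - 1) * 2 ^ (p/(n:ℝ) + 1) := by
          rw [Real.div_rpow ht.le (by norm_num : (0:ℝ) ≤ 2), div_eq_mul_inv,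
            ← Real.rpow_neg (by norm_num : (0:ℝ) ≤ 2)]
          congr 1
          ring
        have e2 : t ^ (-(p/(n:ℝ)) - 1) * t ^ (q - 1) = t ^ (p - 2) := by
          rw [← Real.rpow_add ht]
          congr 1
          rw [hqp]
          ring
        calc (t/2) ^ (-(p/(n:ℝ)) - 1) * (q * t ^ (q-1))
            = q * 2 ^ (p/(n:ℝ) + 1) * (t ^ (-(p/(n:ℝ)) - 1) * t ^ (q-1)) := by rw [e1]; ring
          _ = c₂ * t ^ (p - 2) := by rw [e2, hc2def]
      rw [hll2, hldef, ENNReal.ofReal_rpow_of_pos (by linarith),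
        ← ENNReal.ofReal_mul (Real.rpow_nonneg (by linarith) _), hreal,
        ENNReal.ofReal_mul hc20.le, ENNReal.ofReal_rpow_of_pos ht,
        show p - 1 - 1 = p - 2 by ring]
    calc μ {a | t < (A a).toReal} * ENNReal.ofReal (q * t ^ (q-1))
        ≤ (Vinv * I ^ (1/(n:ℝ)) * l ^ (-(p/(n:ℝ))) * (l⁻¹ * N)) *
            ENNReal.ofReal (q * t ^ (q-1)) := by
          apply mul_le_mul_left
          exact le_trans hD (mul_le_mul_left hρle _)
      _ = (Vinv * I ^ (1/(n:ℝ))) * (l ^ (-(p/(n:ℝ))) * l⁻¹ * ENNReal.ofReal (q * t ^ (q-1))) * N := by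
          ring
      _ = (Vinv * I ^ (1/(n:ℝ)) * ENNReal.ofReal c₂) *
            (ENNReal.ofReal t ^ (p - 1 - 1) * N) := by
          rw [hscalar]
          ring
  have hconst_ne : Vinv * I ^ (1/(n:ℝ)) * ENNReal.ofReal c₂ ≠ ∞ :=
    ENNReal.mul_ne_top (ENNReal.mul_ne_top hVinvt
      (ENNReal.rpow_ne_top_of_nonneg (by positivity) hIfin)) ENNReal.ofReal_ne_top
  have hmain : ∫⁻ z, A z ^ q ∂μ ≤
      (Vinv * I ^ (1/(n:ℝ)) * ENNReal.ofReal c₂) * (ENNReal.ofReal c₃ * I) := by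
    rw [hAq]
    calc ∫⁻ t in Ioi (0:ℝ), μ {a | t < (A a).toReal} * ENNReal.ofReal (q * t ^ (q-1))
        ≤ ∫⁻ t in Ioi (0:ℝ), (Vinv * I ^ (1/(n:ℝ)) * ENNReal.ofReal c₂) *
            (ENNReal.ofReal t ^ (p - 1 - 1) *
              ∫⁻ y in {y | ENNReal.ofReal (t/2) < g y}, g y) := by
          apply lintegral_mono_ae
          filter_upwards [self_mem_ae_restrict measurableSet_Ioi] with t ht
          exact hDbound t (mem_Ioi.1 ht)
      _ = (Vinv * I ^ (1/(n:ℝ)) * ENNReal.ofReal c₂) *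
            ∫⁻ t in Ioi (0:ℝ), ENNReal.ofReal t ^ (p - 1 - 1) *
              ∫⁻ y in {y | ENNReal.ofReal (t/2) < g y}, g y :=
          lintegral_const_mul' _ _ hconst_ne
      _ ≤ (Vinv * I ^ (1/(n:ℝ)) * ENNReal.ofReal c₂) *
            (ENNReal.ofReal (2 ^ (p-1) / (p-1)) * ∫⁻ y, g y ^ (p - 1 + 1)) :=
          mul_le_mul_right (step5 g hgm hgfin (by linarith : (0:ℝ) < p - 1)) _
      _ = (Vinv * I ^ (1/(n:ℝ)) * ENNReal.ofReal c₂) * (ENNReal.ofReal c₃ * I) := by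
          rw [show p - 1 + 1 = p by ring, hc3def, hIdef]
  have hexp : (1:ℝ)/(n:ℝ) + 1 = q / p := by
    rw [hqdef]
    field_simp
    ring
  have hchain : ∫⁻ z, (‖F z‖₊ : ℝ≥0∞) ^ q ∂μ ≤ K * I ^ (q / p) := by
    calc ∫⁻ z, (‖F z‖₊ : ℝ≥0∞) ^ q ∂μ
        ≤ ∫⁻ z, (ENNReal.ofReal C * A z) ^ q ∂μ := by
          apply lintegral_mono_ae
          filter_upwards [self_mem_ae_restrict hSm] with z hz
          exact ENNReal.rpow_le_rpow (hF1 z hz) hq0.le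
      _ = ENNReal.ofReal C ^ q * ∫⁻ z, A z ^ q ∂μ := by
          rw [← lintegral_const_mul' _ _
            (ENNReal.rpow_ne_top_of_nonneg hq0.le ENNReal.ofReal_ne_top)]
          exact lintegral_congr fun z => by rw [ENNReal.mul_rpow_of_nonneg _ _ hq0.le]
      _ ≤ ENNReal.ofReal C ^ q * ((Vinv * I ^ (1/(n:ℝ)) * ENNReal.ofReal c₂) *
            (ENNReal.ofReal c₃ * I)) := mul_le_mul_right hmain _
      _ = K * (I ^ (1/(n:ℝ)) * I) := by rw [hKdef]; ring
      _ = K * I ^ (q / p) := by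
          rw [rpow_mul_self hIfin (by positivity), hexp]
  have hqE0 : (ENNReal.ofReal q) ≠ 0 := by
    rw [ne_eq, ENNReal.ofReal_eq_zero, not_le]
    linarith
  rw [eLpNorm_eq_lintegral_rpow_enorm_toReal hqE0 ENNReal.ofReal_ne_top,
    ENNReal.toReal_ofReal hq0.le, hIeq]
  have hfinal := ENNReal.rpow_le_rpow hchain (by positivity : (0:ℝ) ≤ 1/q)
  rw [ENNReal.mul_rpow_of_nonneg _ _ (by positivity : (0:ℝ) ≤ 1/q),
    ← ENNReal.rpow_mul I, show (q/p) * (1/q) = 1/p by rw [mul_one_div, div_div, mul_comm p q, ← div_div, div_self hq0.ne']] at hfinal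
  refine le_trans hfinal (mul_le_mul_left ?_ _)
  calc K ^ (1/q) = ENNReal.ofReal ((K ^ (1/q)).toReal) :=
        (ENNReal.ofReal_toReal (ENNReal.rpow_ne_top_of_nonneg (by positivity) hKt)).symm
    _ ≤ ENNReal.ofReal ((K ^ (1/q)).toReal + 1) := ENNReal.ofReal_le_ofReal (by linarith)
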